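/- arXiv:1509.08243 — 4 statements merged into one kernel-verified Lean document; each statement's English description precedes it below -/
import Mathlib

section
/- Let b, c be integers with δ = b² - c square-free, δ ≠ 0, and δ ≢ 1 (mod 4). Define ρ(d) = #{0 ≤ m < d : m² + 2bm + c ≡ 0 (mod d)}, and define χ(n) = (δ/n) (the Jacobi symbol) if gcd(n, 2δ) = 1 and χ(n) = 0 otherwise. Then for every positive integer d, ρ(d) = Σ_{lm = d} μ²(l) χ(m), where μ is the Möbius function. -/
open Finset

/-- number of square roots of δ in ZMod n, as a filter card -/
private def SQ3Z (δ : ℤ) (n : ℕ) [NeZero n] : ℕ :=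
  (Finset.univ.filter (fun x : ZMod n => x ^ 2 = (δ : ZMod n))).card

private lemma SQ3_bridge (b δ : ℤ) (n : ℕ) [NeZero n] :
    ((Finset.range n).filter (fun m : ℕ => (n : ℤ) ∣ ((m : ℤ) + b) ^ 2 - δ)).card
      = SQ3Z δ n := by
  rw [SQ3Z]
  refine Finset.card_bij (fun m _ => (m : ZMod n) + (b : ZMod n)) ?_ ?_ ?_
  · intro m hm
    simp only [Finset.mem_filter, Finset.mem_range] at hm ⊢
    refine ⟨Finset.mem_univ _, ?_⟩
    have h := hm.2
    rw [← ZMod.intCast_zmod_eq_zero_iff_dvd] at h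
    push_cast at h
    rw [sub_eq_zero] at h
    exact h
  · intro m₁ h₁ m₂ h₂ h
    simp only [Finset.mem_filter, Finset.mem_range] at h₁ h₂
    have : ((m₁ : ZMod n)) = (m₂ : ZMod n) := by
      have := add_right_cancel h
      exact this
    have := congrArg ZMod.val this
    rwa [ZMod.val_cast_of_lt h₁.1, ZMod.val_cast_of_lt h₂.1] at this
  · intro x hx
    simp only [Finset.mem_filter, Finset.mem_univ, true_and] at hx
    refine ⟨(x - (b : ZMod n)).val, ?_, ?_⟩
    · simp only [Finset.mem_filter, Finset.mem_range]
      refine ⟨ZMod.val_lt _, ?_⟩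
      rw [← ZMod.intCast_zmod_eq_zero_iff_dvd]
      push_cast
      rw [ZMod.natCast_rightInverse (x - (b : ZMod n))]
      rw [sub_add_cancel, hx, sub_self]
    · show ((x - (b : ZMod n)).val : ZMod n) + (b : ZMod n) = x
      rw [ZMod.natCast_rightInverse (x - (b : ZMod n)), sub_add_cancel]

private lemma SQ3_mul (δ : ℤ) (m n : ℕ) [NeZero m] [NeZero n] (h : m.Coprime n) :
    SQ3Z δ (m * n) = SQ3Z δ m * SQ3Z δ n := by
  haveI : NeZero (m * n) := ⟨mul_ne_zero (NeZero.ne m) (NeZero.ne n)⟩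
  rw [SQ3Z, SQ3Z, SQ3Z, ← Finset.card_product, ← Finset.filter_product]
  refine Finset.card_bij (fun x _ => ZMod.chineseRemainder h x) ?_ ?_ ?_
  · intro x hx
    simp only [Finset.mem_filter, Finset.mem_univ, true_and, Finset.mem_product] at hx ⊢
    have h1 : (ZMod.chineseRemainder h) ((δ : ZMod (m*n))) = ((δ : ZMod m), (δ : ZMod n)) := by
      rw [map_intCast]; exact Prod.ext (Prod.fst_intCast δ) (Prod.snd_intCast δ)
    constructor
    · have := congrArg (fun y => ((ZMod.chineseRemainder h) y).1) hx
      simpa [map_pow, h1] using this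
    · have := congrArg (fun y => ((ZMod.chineseRemainder h) y).2) hx
      simpa [map_pow, h1] using this
  · intro x₁ _ x₂ _ hx
    exact (ZMod.chineseRemainder h).injective hx
  · intro y hy
    simp only [Finset.mem_filter, Finset.mem_univ, Finset.mem_product, true_and, and_self] at hy
    refine ⟨(ZMod.chineseRemainder h).symm y, Finset.mem_filter.mpr ⟨by simp, ?_⟩,
      (ZMod.chineseRemainder h).apply_symm_apply y⟩
    have hy2 : y ^ 2 = ((δ : ZMod m), (δ : ZMod n)) :=
      Prod.ext (by simpa using hy.1) (by simpa using hy.2)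
    have : ((ZMod.chineseRemainder h).symm y) ^ 2
        = (ZMod.chineseRemainder h).symm (y ^ 2) := by rw [map_pow]
    rw [this, hy2]
    have : ((δ : ZMod m), (δ : ZMod n)) = ((δ : ZMod m × ZMod n)) :=
      (Prod.ext (Prod.fst_intCast δ) (Prod.snd_intCast δ)).symm
    rw [this, map_intCast]


private lemma SQ3_nosol (δ : ℤ) (m n : ℕ) (hmn : m ∣ n) [NeZero m] [NeZero n]
    (h : ∀ x : ZMod m, x ^ 2 ≠ (δ : ZMod m)) (x : ZMod n) : x ^ 2 ≠ (δ : ZMod n) := by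
  intro hx
  exact h (ZMod.castHom hmn (ZMod m) x) (by rw [← map_pow, hx, map_intCast])

private lemma SQ3Z_zero (δ : ℤ) (n : ℕ) [NeZero n]
    (h : ∀ x : ZMod n, x ^ 2 ≠ (δ : ZMod n)) : SQ3Z δ n = 0 := by
  rw [SQ3Z, Finset.card_eq_zero, Finset.filter_eq_empty_iff]
  exact fun {x} _ => h x

private lemma SQ3_ndvd (δ : ℤ) (p : ℕ) (hpd : ¬(p : ℤ) ∣ δ) (k : ℕ)
    (hk : 1 ≤ k) (X : ℤ) (hX : (p : ℤ) ^ k ∣ X ^ 2 - δ) : ¬(p : ℤ) ∣ X := by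
  intro hdvd
  have h1 : (p : ℤ) ∣ X ^ 2 - δ :=
    (dvd_pow_self (p : ℤ) (by omega : k ≠ 0)).trans hX
  have h2 : (p : ℤ) ∣ X ^ 2 := dvd_pow hdvd two_ne_zero
  have h3 : (p : ℤ) ∣ X ^ 2 - (X ^ 2 - δ) := dvd_sub h2 h1
  simp only [sub_sub_cancel] at h3
  exact hpd h3

/-- Hensel lifting of a square root, odd p, p ∤ δ -/
private lemma SQ3_lift (δ : ℤ) (p : ℕ) (hp : p.Prime) (hodd : p ≠ 2) (hpd : ¬(p : ℤ) ∣ δ)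
    (h : ∃ X : ℤ, (p : ℤ) ∣ X ^ 2 - δ) (k : ℕ) :
    ∃ X : ℤ, (p : ℤ) ^ (k + 1) ∣ X ^ 2 - δ := by
  induction k with
  | zero => simpa using h
  | succ k ih =>
    obtain ⟨X, hX⟩ := ih
    obtain ⟨u, hu⟩ := hX
    have hpX : ¬(p : ℤ) ∣ X := SQ3_ndvd δ p hpd (k + 1) (by omega) X ⟨u, hu⟩
    have hprime : Prime (p : ℤ) := Nat.prime_iff_prime_int.mp hp
    have hcop : IsCoprime (p : ℤ) (2 * X) := by
      rw [Prime.coprime_iff_not_dvd hprime]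
      intro hdvd
      rcases hprime.dvd_mul.mp hdvd with h2 | hX'
      · have : p ∣ 2 := by exact_mod_cast h2
        exact hodd ((Nat.prime_dvd_prime_iff_eq hp Nat.prime_two).mp this)
      · exact hpX hX'
    obtain ⟨a, bb, hab⟩ := hcop
    refine ⟨X - u * bb * (p : ℤ) ^ (k + 1), u * a + u ^ 2 * bb ^ 2 * (p : ℤ) ^ k, ?_⟩
    have hk2 : (p : ℤ) ^ (k + 1 + 1) = (p : ℤ) ^ (k + 1) * p := by ring
    linear_combination hu - (p : ℤ) ^ (k + 1) * u * hab



/-- exactly two square roots mod p^k, p odd prime not dividing δ, given one exists -/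
private lemma SQ3_card_two (δ : ℤ) (p k : ℕ) (hp : p.Prime) (hodd : p ≠ 2)
    (hpd : ¬(p : ℤ) ∣ δ) (hk : 1 ≤ k) [NeZero (p ^ k)]
    (X : ℤ) (hX : (p : ℤ) ^ k ∣ X ^ 2 - δ) : SQ3Z δ (p ^ k) = 2 := by
  have hprime : Prime (p : ℤ) := Nat.prime_iff_prime_int.mp hp
  have hp2 : ¬(p : ℤ) ∣ 2 := by
    intro h2
    have : p ∣ 2 := by exact_mod_cast h2
    exact hodd ((Nat.prime_dvd_prime_iff_eq hp Nat.prime_two).mp this)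
  have hpX : ¬(p : ℤ) ∣ X := SQ3_ndvd δ p hpd k hk X hX
  set x : ZMod (p ^ k) := (X : ZMod (p ^ k)) with hxdef
  have castdvd : ∀ Z : ℤ, ((Z : ZMod (p ^ k)) = 0 ↔ (p : ℤ) ^ k ∣ Z) := by
    intro Z
    rw [ZMod.intCast_zmod_eq_zero_iff_dvd]
    push_cast
    rfl
  have hxsol : x ^ 2 = (δ : ZMod (p ^ k)) := by
    rw [← sub_eq_zero, hxdef]
    have : ((X ^ 2 - δ : ℤ) : ZMod (p ^ k)) = 0 := (castdvd _).mpr hX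
    push_cast at this
    exact this
  have key : Finset.univ.filter (fun y : ZMod (p ^ k) => y ^ 2 = (δ : ZMod (p ^ k)))
      = {x, -x} := by
    ext y
    simp only [Finset.mem_filter, Finset.mem_univ, true_and, Finset.mem_insert,
      Finset.mem_singleton]
    constructor
    · intro hy
      -- lift y to an integer
      set Y : ℤ := (y.val : ℤ) with hYdef
      have hYcast : (Y : ZMod (p ^ k)) = y := by
        rw [hYdef]; push_cast; exact ZMod.natCast_rightInverse y
      have hYsol : (p : ℤ) ^ k ∣ Y ^ 2 - δ := by
        rw [← castdvd]
        push_cast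
        rw [hYcast, hy, sub_self]
      have hfac : (p : ℤ) ^ k ∣ (Y - X) * (Y + X) := by
        have : (Y - X) * (Y + X) = (Y ^ 2 - δ) - (X ^ 2 - δ) := by ring
        rw [this]
        exact dvd_sub hYsol hX
      have hpY : ¬(p : ℤ) ∣ Y := SQ3_ndvd δ p hpd k hk Y hYsol
      have hnotboth : ¬((p : ℤ) ∣ (Y - X) ∧ (p : ℤ) ∣ (Y + X)) := by
        rintro ⟨h1, h2⟩
        have : (p : ℤ) ∣ 2 * Y := by
          have : (Y - X) + (Y + X) = 2 * Y := by ring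
          rw [← this]; exact dvd_add h1 h2
        rcases hprime.dvd_mul.mp this with h | h
        · exact hp2 h
        · exact hpY h
      by_cases hc : (p : ℤ) ∣ (Y + X)
      · -- then p ∤ Y - X, so p^k ∣ Y + X, y = -x
        right
        have hnd : ¬(p : ℤ) ∣ (Y - X) := fun h => hnotboth ⟨h, hc⟩
        have hcop : IsCoprime ((p : ℤ) ^ k) (Y - X) :=
          ((Prime.coprime_iff_not_dvd hprime).mpr hnd).pow_left
        have hdvd : (p : ℤ) ^ k ∣ (Y + X) := hcop.dvd_of_dvd_mul_left hfac
        have : ((Y + X : ℤ) : ZMod (p ^ k)) = 0 := (castdvd _).mpr hdvd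
        push_cast at this
        rw [hYcast] at this
        exact eq_neg_of_add_eq_zero_left this
      · have hnd := hc
        have hcop : IsCoprime ((p : ℤ) ^ k) (Y + X) :=
          ((Prime.coprime_iff_not_dvd hprime).mpr hnd).pow_left
        have hdvd : (p : ℤ) ^ k ∣ (Y - X) := hcop.dvd_of_dvd_mul_right hfac
        have : ((Y - X : ℤ) : ZMod (p ^ k)) = 0 := (castdvd _).mpr hdvd
        push_cast at this
        rw [hYcast] at this
        left
        rw [sub_eq_zero] at this
        exact this
    · rintro (rfl | rfl)
      · exact hxsol
      · rw [show (-x) ^ 2 = x ^ 2 by ring]; exact hxsol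
  rw [SQ3Z, key]
  apply Finset.card_pair
  intro hcontra
  have this2 : (2 : ZMod (p ^ k)) * x = 0 := by
    have hxx : x + x = 0 := by nth_rewrite 2 [hcontra]; simp
    rw [two_mul]; exact hxx
  have h2X : ((2 * X : ℤ) : ZMod (p ^ k)) = 0 := by push_cast; rw [← hxdef]; exact this2
  rw [castdvd] at h2X
  have hpk : (p : ℤ) ∣ 2 * X := (dvd_pow_self (p : ℤ) (by omega : k ≠ 0)).trans h2X
  rcases hprime.dvd_mul.mp hpk with h | h
  · exact hp2 h
  · exact hpX h


/-- one square root of δ mod p when p ∣ δ, p prime -/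
private lemma SQ3_dvd_one (δ : ℤ) (p : ℕ) [hpf : Fact p.Prime] (hpd : (p : ℤ) ∣ δ) :
    SQ3Z δ p = 1 := by
  have hp := hpf.out
  have hδ0 : (δ : ZMod p) = 0 := (ZMod.intCast_zmod_eq_zero_iff_dvd δ p).mpr hpd
  rw [SQ3Z]
  have : Finset.univ.filter (fun x : ZMod p => x ^ 2 = (δ : ZMod p)) = {0} := by
    ext x
    simp only [Finset.mem_filter, Finset.mem_univ, true_and, Finset.mem_singleton, hδ0,
      pow_eq_zero_iff two_ne_zero]
  rw [this, Finset.card_singleton]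

/-- one square root mod 2 always -/
private lemma SQ3_two_one (δ : ℤ) : SQ3Z δ 2 = 1 := by
  rw [SQ3Z]
  have : ∀ d : ZMod 2, (Finset.univ.filter (fun x : ZMod 2 => x ^ 2 = d)).card = 1 := by decide
  exact this _

/-- no square root of δ mod p² when p ∣ δ and δ squarefree -/
private lemma SQ3_sq_nosol (δ : ℤ) (hsf : Squarefree δ) (p : ℕ) (hp : p.Prime)
    (hpd : (p : ℤ) ∣ δ) (x : ZMod (p ^ 2)) : x ^ 2 ≠ (δ : ZMod (p ^ 2)) := by
  haveI : NeZero (p ^ 2) := ⟨pow_ne_zero _ hp.ne_zero⟩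
  intro hx
  set Y : ℤ := (x.val : ℤ) with hYdef
  have hYcast : (Y : ZMod (p ^ 2)) = x := by rw [hYdef]; push_cast; exact ZMod.natCast_rightInverse x
  have hYsol : (p : ℤ) ^ 2 ∣ Y ^ 2 - δ := by
    have : ((Y ^ 2 - δ : ℤ) : ZMod (p ^ 2)) = 0 := by push_cast; rw [hYcast, hx, sub_self]
    rw [ZMod.intCast_zmod_eq_zero_iff_dvd] at this
    exact_mod_cast this
  have hprime : Prime (p : ℤ) := Nat.prime_iff_prime_int.mp hp
  have hpY2 : (p : ℤ) ∣ Y ^ 2 := by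
    have h1 : (p : ℤ) ∣ Y ^ 2 - δ := (dvd_pow_self (p : ℤ) two_ne_zero).trans hYsol
    have := dvd_add h1 hpd
    simpa using this
  have hpY : (p : ℤ) ∣ Y := hprime.dvd_of_dvd_pow hpY2
  have hp2Y2 : (p : ℤ) ^ 2 ∣ Y ^ 2 := pow_dvd_pow_of_dvd hpY 2
  have hp2δ : (p : ℤ) ^ 2 ∣ δ := by
    have := dvd_sub hp2Y2 hYsol
    simpa using this
  have := hsf (p : ℤ) (by rwa [← sq])
  exact hprime.not_unit this

/-- no square root of δ mod 4 when δ % 4 = 3 -/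
private lemma SQ3_four_nosol (δ : ℤ) (h3 : δ % 4 = 3) (x : ZMod (2 ^ 2)) :
    x ^ 2 ≠ (δ : ZMod (2 ^ 2)) := by
  have hcast : (δ : ZMod (2 ^ 2)) = 3 := by
    have hq : δ = 4 * (δ / 4) + 3 := by omega
    rw [hq]
    push_cast
    rw [show ((4 : ZMod (2 ^ 2))) = 0 by decide]
    ring
  rw [hcast]
  revert x
  decide

private lemma SQ3Z_congr (δ : ℤ) {m n : ℕ} [NeZero m] [NeZero n] (h : m = n) :
    SQ3Z δ m = SQ3Z δ n := by subst h; rfl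

private lemma SQ3_A_ne_one (δ : ℤ) (hδ0 : δ ≠ 0) : (2 * δ).natAbs ≠ 1 := by
  rw [Int.natAbs_mul, show (2 : ℤ).natAbs = 2 from rfl]
  omega

private def SQ3chi (δ : ℤ) : ℕ → ℤ :=
  fun n => if Nat.gcd n (2 * δ).natAbs = 1 then jacobiSym δ n else 0

private lemma SQ3chi_zero (δ : ℤ) (hδ0 : δ ≠ 0) : SQ3chi δ 0 = 0 := by
  rw [SQ3chi]
  simp only [Nat.gcd_zero_left]
  rw [if_neg (SQ3_A_ne_one δ hδ0)]

private lemma SQ3chi_one (δ : ℤ) : SQ3chi δ 1 = 1 := by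
  simp [SQ3chi]

private lemma SQ3chi_mul (δ : ℤ) (hδ0 : δ ≠ 0) (m n : ℕ) :
    SQ3chi δ (m * n) = SQ3chi δ m * SQ3chi δ n := by
  rcases Nat.eq_zero_or_pos m with rfl | hm
  · rw [zero_mul, SQ3chi_zero δ hδ0, zero_mul]
  rcases Nat.eq_zero_or_pos n with rfl | hn
  · rw [mul_zero, SQ3chi_zero δ hδ0, mul_zero]
  haveI : NeZero m := ⟨hm.ne'⟩
  haveI : NeZero n := ⟨hn.ne'⟩
  by_cases h : (m * n).Coprime ((2 * δ).natAbs)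
  · obtain ⟨h1, h2⟩ := Nat.coprime_mul_iff_left.mp h
    rw [SQ3chi, SQ3chi, SQ3chi, if_pos h, if_pos h1, if_pos h2, jacobiSym.mul_right]
  · rw [SQ3chi, if_neg h]
    rcases (not_and_or.mp (fun hh => h (Nat.coprime_mul_iff_left.mpr hh))) with h1 | h2
    · rw [SQ3chi, if_neg h1, zero_mul]
    · rw [SQ3chi, SQ3chi, if_neg h2, mul_zero]

private lemma SQ3chi_pp_zero (δ : ℤ) (p : ℕ) (hp : p.Prime)
    (hdvd : p ∣ (2 * δ).natAbs) (j : ℕ) (hj : 1 ≤ j) : SQ3chi δ (p ^ j) = 0 := by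
  rw [SQ3chi, if_neg]
  intro hgcd
  have : p ∣ 1 := hgcd ▸ Nat.dvd_gcd (dvd_pow_self p (by omega)) hdvd
  exact hp.one_lt.ne' (Nat.dvd_one.mp this)

private lemma SQ3chi_pp (δ : ℤ) (p : ℕ) (hcop : p.Coprime (2 * δ).natAbs) (j : ℕ) :
    SQ3chi δ (p ^ j) = (jacobiSym δ p) ^ j := by
  rw [SQ3chi, if_pos (Nat.Coprime.pow_left j hcop), jacobiSym.pow_right]

private def SQ3X (δ : ℤ) (hδ0 : δ ≠ 0) : ArithmeticFunction ℤ :=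
  ⟨SQ3chi δ, SQ3chi_zero δ hδ0⟩

private lemma SQ3X_mult (δ : ℤ) (hδ0 : δ ≠ 0) : (SQ3X δ hδ0).IsMultiplicative :=
  ⟨SQ3chi_one δ, fun {m n} _ => SQ3chi_mul δ hδ0 m n⟩

private def SQ3F (b δ : ℤ) : ArithmeticFunction ℤ :=
  ⟨fun n => (((Finset.range n).filter
      (fun m : ℕ => (n : ℤ) ∣ ((m : ℤ) + b) ^ 2 - δ)).card : ℤ), by simp⟩

private lemma SQ3F_eq (b δ : ℤ) (n : ℕ) [NeZero n] : SQ3F b δ n = (SQ3Z δ n : ℤ) := by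
  show (((Finset.range n).filter _).card : ℤ) = _
  rw [SQ3_bridge b δ n]

private lemma SQ3F_mult (b δ : ℤ) : (SQ3F b δ).IsMultiplicative := by
  constructor
  · haveI : NeZero 1 := ⟨one_ne_zero⟩
    rw [SQ3F_eq b δ 1]
    rw [SQ3Z]
    norm_num
    rw [Finset.filter_true_of_mem (fun x _ => Subsingleton.elim _ _)]
    simp
  · intro m n hmn
    rcases Nat.eq_zero_or_pos m with rfl | hm
    · rw [Nat.coprime_zero_left] at hmn
      subst hmn
      simp [SQ3F]
    rcases Nat.eq_zero_or_pos n with rfl | hn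
    · rw [Nat.coprime_zero_right] at hmn
      subst hmn
      simp [SQ3F]
    haveI : NeZero m := ⟨hm.ne'⟩
    haveI : NeZero n := ⟨hn.ne'⟩
    haveI : NeZero (m * n) := ⟨mul_ne_zero hm.ne' hn.ne'⟩
    rw [SQ3F_eq, SQ3F_eq, SQ3F_eq, SQ3_mul δ m n hmn]
    push_cast
    ring

private lemma SQ3G_pp (δ : ℤ) (hδ0 : δ ≠ 0) (p k : ℕ) (hp : p.Prime) (hk : 1 ≤ k) :
    ((ArithmeticFunction.pmul ArithmeticFunction.moebius ArithmeticFunction.moebius)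
      * (SQ3X δ hδ0) : ArithmeticFunction ℤ) (p ^ k)
      = SQ3chi δ (p ^ k) + SQ3chi δ (p ^ (k - 1)) := by
  have hXapp : ∀ t, SQ3X δ hδ0 t = SQ3chi δ t := fun t => rfl
  rw [ArithmeticFunction.mul_apply]
  rw [Nat.sum_divisorsAntidiagonal (fun i j =>
    (ArithmeticFunction.pmul ArithmeticFunction.moebius ArithmeticFunction.moebius) i
      * SQ3X δ hδ0 j)]
  rw [Nat.sum_divisors_prime_pow hp]
  obtain ⟨k', rfl⟩ : ∃ k', k = k' + 1 := ⟨k - 1, by omega⟩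
  rw [Finset.sum_range_succ', Finset.sum_range_succ']
  have hzero : ∀ i, (ArithmeticFunction.pmul ArithmeticFunction.moebius
      ArithmeticFunction.moebius) (p ^ (i + 1 + 1)) = 0 := by
    intro i
    rw [ArithmeticFunction.pmul_apply, ArithmeticFunction.moebius_eq_zero_of_not_squarefree,
      zero_mul]
    intro hsf
    exact hp.one_lt.ne' (Nat.isUnit_iff.mp
      (hsf p (dvd_trans (by rw [← sq]) (pow_dvd_pow p (by omega : 2 ≤ i + 1 + 1)))))
  rw [Finset.sum_eq_zero (fun i _ => by rw [hzero i, zero_mul]), zero_add]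
  rw [hXapp, hXapp]
  have h0 : (ArithmeticFunction.pmul ArithmeticFunction.moebius
      ArithmeticFunction.moebius) (p ^ 0) = 1 := by
    simp [ArithmeticFunction.pmul_apply]
  have h1 : (ArithmeticFunction.pmul ArithmeticFunction.moebius
      ArithmeticFunction.moebius) (p ^ 1) = 1 := by
    rw [ArithmeticFunction.pmul_apply, pow_one, ArithmeticFunction.moebius_apply_prime hp]
    ring
  rw [h0, h1, one_mul, one_mul]
  have hd0 : p ^ (k' + 1) / p ^ 0 = p ^ (k' + 1) := by simp
  have hd1 : p ^ (k' + 1) / p ^ 1 = p ^ k' := Nat.pow_div (by omega) hp.pos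
  rw [hd0, hd1]
  simp only [Nat.add_sub_cancel]
  ring

private lemma SQ3F_pp (b δ : ℤ) (hδ0 : δ ≠ 0) (hsf : Squarefree δ) (hmod : δ % 4 ≠ 1)
    (p k : ℕ) (hp : p.Prime) (hk : 1 ≤ k) :
    SQ3F b δ (p ^ k) = SQ3chi δ (p ^ k) + SQ3chi δ (p ^ (k - 1)) := by
  haveI : Fact p.Prime := ⟨hp⟩
  haveI : NeZero (p ^ k) := ⟨pow_ne_zero _ hp.ne_zero⟩
  rw [SQ3F_eq]
  by_cases hp2 : p = 2
  · subst hp2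
    have h2dvd : (2 : ℕ) ∣ (2 * δ).natAbs := by
      rw [Int.natAbs_mul, show (2 : ℤ).natAbs = 2 from rfl]
      exact dvd_mul_right 2 _
    rcases Nat.lt_or_ge k 2 with hk1 | hk2
    · -- k = 1
      have hk1 : k = 1 := by omega
      subst hk1
      rw [SQ3Z_congr δ (pow_one 2), SQ3_two_one δ, SQ3chi_pp_zero δ 2 hp h2dvd 1 le_rfl,
        pow_zero, SQ3chi_one δ]
      norm_num
    · -- k ≥ 2 : no solutions mod 4
      have hmod4 : δ % 4 = 2 ∨ δ % 4 = 3 := by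
        have hne0 : δ % 4 ≠ 0 := by
          intro h0
          have h4 : (4 : ℤ) ∣ δ := Int.dvd_of_emod_eq_zero h0
          have := hsf 2 (by
            have : (2 : ℤ) * 2 = 4 := by norm_num
            rw [this]; exact h4)
          rw [Int.isUnit_iff] at this
          omega
        have := Int.emod_nonneg δ (by norm_num : (4 : ℤ) ≠ 0)
        have := Int.emod_lt_of_pos δ (by norm_num : (0 : ℤ) < 4)
        omega
      have hnosol4 : ∀ x : ZMod (2 ^ 2), x ^ 2 ≠ (δ : ZMod (2 ^ 2)) := by
        rcases hmod4 with h2 | h3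
        · have h2δ : (2 : ℤ) ∣ δ := by
            have := Int.emod_emod_of_dvd δ (by norm_num : (2 : ℤ) ∣ 4)
            rw [h2] at this
            exact Int.dvd_of_emod_eq_zero (by omega)
          exact SQ3_sq_nosol δ hsf 2 hp h2δ
        · exact SQ3_four_nosol δ h3
      rw [SQ3Z_zero δ (2 ^ k)
        (SQ3_nosol δ (2 ^ 2) (2 ^ k) (pow_dvd_pow 2 hk2) hnosol4)]
      rw [SQ3chi_pp_zero δ 2 hp h2dvd k hk, SQ3chi_pp_zero δ 2 hp h2dvd (k - 1) (by omega)]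
      norm_num
  · -- p odd
    by_cases hdvd : (p : ℤ) ∣ δ
    · have hpdvdA : p ∣ (2 * δ).natAbs := by
        rw [Int.natAbs_mul, show (2 : ℤ).natAbs = 2 from rfl]
        exact Dvd.dvd.mul_left (by
          have := Int.natAbs_dvd_natAbs.mpr hdvd
          simpa using this) 2
      rcases Nat.lt_or_ge k 2 with hk1 | hk2
      · have hk1 : k = 1 := by omega
        subst hk1
        rw [SQ3Z_congr δ (pow_one p), SQ3_dvd_one δ p hdvd,
          SQ3chi_pp_zero δ p hp hpdvdA 1 le_rfl, pow_zero, SQ3chi_one δ]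
        norm_num
      · have hnosol : ∀ x : ZMod (p ^ 2), x ^ 2 ≠ (δ : ZMod (p ^ 2)) :=
          SQ3_sq_nosol δ hsf p hp hdvd
        rw [SQ3Z_zero δ (p ^ k)
          (SQ3_nosol δ (p ^ 2) (p ^ k) (pow_dvd_pow p hk2) hnosol)]
        rw [SQ3chi_pp_zero δ p hp hpdvdA k hk, SQ3chi_pp_zero δ p hp hpdvdA (k - 1) (by omega)]
        norm_num
    · -- p odd, p ∤ δ
      have hcop : p.Coprime (2 * δ).natAbs := by
        rw [Int.natAbs_mul, show (2 : ℤ).natAbs = 2 from rfl]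
        apply Nat.Coprime.mul_right
        · exact (hp.coprime_iff_not_dvd).mpr (fun h =>
            hp2 ((Nat.prime_dvd_prime_iff_eq hp Nat.prime_two).mp h))
        · exact (hp.coprime_iff_not_dvd).mpr (fun h =>
            hdvd (Int.natAbs_dvd_natAbs.mp (by simpa using h)))
      rw [SQ3chi_pp δ p hcop k, SQ3chi_pp δ p hcop (k - 1)]
      have hδne : (δ : ZMod p) ≠ 0 := fun h =>
        hdvd ((ZMod.intCast_zmod_eq_zero_iff_dvd δ p).mp h)
      by_cases hsq : IsSquare (δ : ZMod p)
      · have hJ : jacobiSym δ p = 1 := by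
          rw [← jacobiSym.legendreSym.to_jacobiSym]
          exact (legendreSym.eq_one_iff p hδne).mpr hsq
        obtain ⟨y, hy⟩ := hsq
        have hbase : ∃ X : ℤ, (p : ℤ) ∣ X ^ 2 - δ := by
          refine ⟨(y.val : ℤ), ?_⟩
          rw [← ZMod.intCast_zmod_eq_zero_iff_dvd]
          push_cast
          rw [ZMod.natCast_rightInverse y, hy]
          ring
        obtain ⟨X, hX⟩ := SQ3_lift δ p hp hp2 hdvd hbase (k - 1)
        rw [show k - 1 + 1 = k by omega] at hX
        rw [SQ3_card_two δ p k hp hp2 hdvd hk X hX, hJ]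
        norm_num
      · have hJ : jacobiSym δ p = -1 := by
          rw [← jacobiSym.legendreSym.to_jacobiSym]
          exact (legendreSym.eq_neg_one_iff p).mpr hsq
        have hnosolp : ∀ x : ZMod p, x ^ 2 ≠ (δ : ZMod p) := by
          intro x hx
          exact hsq ⟨x, by rw [← hx]; ring⟩
        have : NeZero p := ⟨hp.ne_zero⟩
        rw [SQ3Z_zero δ (p ^ k)
          (SQ3_nosol δ p (p ^ k) (dvd_pow_self p (by omega)) hnosolp)]
        rw [hJ]
        obtain ⟨k', rfl⟩ : ∃ k', k = k' + 1 := ⟨k - 1, by omega⟩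
        simp only [Nat.add_sub_cancel]
        rw [pow_succ]
        push_cast
        ring

theorem stmt_3 (b c : ℤ) (δ : ℤ) (hδ : δ = b ^ 2 - c) (hδ0 : δ ≠ 0)
    (hsf : Squarefree δ) (hmod : δ % 4 ≠ 1)
    (ρ : ℕ → ℕ)
    (hρ : ∀ d : ℕ, ρ d = ((Finset.range d).filter
      (fun m : ℕ => (d : ℤ) ∣ ((m : ℤ) ^ 2 + 2 * b * m + c))).card)
    (χ : ℕ → ℤ)
    (hχ : ∀ n : ℕ, χ n = if Nat.gcd n (2 * δ).natAbs = 1 then jacobiSym δ n else 0)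
    (d : ℕ) (hd : 0 < d) :
    (ρ d : ℤ) = ∑ l ∈ d.divisors, (ArithmeticFunction.moebius l) ^ 2 * χ (d / l) := by
  have hGm : ((ArithmeticFunction.pmul ArithmeticFunction.moebius
      ArithmeticFunction.moebius) * (SQ3X δ hδ0)).IsMultiplicative :=
    (ArithmeticFunction.IsMultiplicative.pmul ArithmeticFunction.isMultiplicative_moebius
      ArithmeticFunction.isMultiplicative_moebius).mul (SQ3X_mult δ hδ0)
  have hFm := SQ3F_mult b δ
  have heq : SQ3F b δ = (ArithmeticFunction.pmul ArithmeticFunction.moebius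
      ArithmeticFunction.moebius) * (SQ3X δ hδ0) := by
    rw [ArithmeticFunction.IsMultiplicative.eq_iff_eq_on_prime_powers _ hFm _ hGm]
    intro p i hp
    rcases Nat.eq_zero_or_pos i with rfl | hi
    · rw [pow_zero, hFm.map_one, hGm.map_one]
    · rw [SQ3F_pp b δ hδ0 hsf hmod p i hp hi, SQ3G_pp δ hδ0 p i hp hi]
  have hρF : (ρ d : ℤ) = SQ3F b δ d := by
    rw [hρ d]
    have hfe : (Finset.range d).filter (fun m : ℕ => (d : ℤ) ∣ ((m : ℤ) ^ 2 + 2 * b * m + c))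
        = (Finset.range d).filter (fun m : ℕ => (d : ℤ) ∣ ((m : ℤ) + b) ^ 2 - δ) := by
      apply Finset.filter_congr
      intro m _
      have h : (m : ℤ) ^ 2 + 2 * b * m + c = ((m : ℤ) + b) ^ 2 - δ := by rw [hδ]; ring
      rw [h]
    rw [hfe]
    rfl
  rw [hρF, heq, ArithmeticFunction.mul_apply,
    Nat.sum_divisorsAntidiagonal (fun i j =>
      (ArithmeticFunction.pmul ArithmeticFunction.moebius ArithmeticFunction.moebius) i
        * SQ3X δ hδ0 j)]
  apply Finset.sum_congr rfl
  intro l _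
  rw [ArithmeticFunction.pmul_apply, ← sq, hχ (d / l)]
  rfl
end

section
/- Let χ be a Dirichlet character and suppose there is a constant κ ≥ 1 such that |Σ_{n ≤ u} χ(n)| ≤ κ for all u ≥ 1, where in addition |Σ_{n ≤ u} χ(n)| ≤ u trivially. Then for every real x ≥ 1, Σ_{m ≤ x} χ(m)/m < log κ + 2. -/
open Finset Real

theorem stmt_7 (χ : ℕ → ℝ) (hvals : ∀ n, χ n = -1 ∨ χ n = 0 ∨ χ n = 1)
    (κ : ℝ) (hκ1 : 1 ≤ κ)
    (hκ : ∀ u : ℝ, 1 ≤ u → |∑ n ∈ Finset.Icc 1 ⌊u⌋₊, χ n| ≤ κ)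
    (x : ℝ) (hx : 1 ≤ x) :
    ∑ m ∈ Finset.Icc 1 ⌊x⌋₊, χ m / m < Real.log κ + 2 := by
  have hκ0 : (0:ℝ) < κ := by linarith
  set N := ⌊x⌋₊ with hNdef
  have hN1 : 1 ≤ N := Nat.le_floor (by exact_mod_cast hx)
  have hN0 : (0:ℝ) < N := by exact_mod_cast hN1
  set X : ℕ → ℝ := fun m => ∑ n ∈ Finset.Icc 1 m, χ n with hXdef
  have hXκ : ∀ m : ℕ, |X m| ≤ κ := by
    intro m
    rcases Nat.eq_zero_or_pos m with h | h
    · simp [hXdef, h]; linarith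
    · have := hκ m (by exact_mod_cast h)
      simpa [Nat.floor_natCast] using this
  have hXm : ∀ m : ℕ, |X m| ≤ (m : ℝ) := by
    intro m
    calc |X m| ≤ ∑ n ∈ Finset.Icc 1 m, |χ n| := Finset.abs_sum_le_sum_abs _ _
      _ ≤ ∑ n ∈ Finset.Icc 1 m, 1 := by
          apply Finset.sum_le_sum
          intro n _
          rcases hvals n with h | h | h <;> simp [h]
      _ = (m : ℝ) := by simp [Nat.card_Icc]
  have hXmin : ∀ m : ℕ, X m ≤ min (m : ℝ) κ := fun m =>
    (le_abs_self _).trans (le_min (hXm m) (hXκ m))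
  have hXsucc : ∀ n : ℕ, X (n + 1) = X n + χ (n + 1) := by
    intro n
    simp only [hXdef]
    exact Finset.sum_Icc_succ_top (by omega) _
  -- Abel summation identity
  have abel : ∀ M : ℕ, ∑ m ∈ Finset.Icc 1 M, χ m / m
      = ∑ m ∈ Finset.Ico 1 M, X m / (m * (m + 1)) + X M / M := by
    intro M
    induction M with
    | zero => simp [hXdef]
    | succ n ih =>
      rcases Nat.eq_zero_or_pos n with hn | hn
      · subst hn; simp [hXdef]
      · have hn0 : (n : ℝ) ≠ 0 := by positivity
        have hn1 : (n : ℝ) + 1 ≠ 0 := by positivity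
        rw [Finset.sum_Icc_succ_top (by omega), Finset.sum_Ico_succ_top (by omega), ih,
          hXsucc n]
        push_cast
        field_simp
        ring
  -- comparison function
  set g : ℝ → ℝ := fun t => if t ≤ κ then Real.log t else Real.log κ + 1 - κ / t with hgdef
  have key : ∀ m : ℕ, 1 ≤ m → min (m : ℝ) κ / (m * (m + 1)) ≤ g (m + 1) - g m := by
    intro m hm
    have hm0 : (0:ℝ) < m := by exact_mod_cast hm
    have hm1 : (0:ℝ) < (m:ℝ) + 1 := by linarith
    by_cases h1 : ((m:ℝ) + 1) ≤ κ
    · have h2 : (m:ℝ) ≤ κ := by linarith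
      have h3 : Real.log ((m:ℝ) / ((m:ℝ)+1)) ≤ (m:ℝ)/((m:ℝ)+1) - 1 :=
        Real.log_le_sub_one_of_pos (by positivity)
      rw [Real.log_div hm0.ne' hm1.ne'] at h3
      have h4 : (m:ℝ)/((m:ℝ)+1) - 1 = -(1/((m:ℝ)+1)) := by field_simp; ring
      have h5 : min (m:ℝ) κ / ((m:ℝ) * ((m:ℝ)+1)) = 1 / ((m:ℝ)+1) := by
        rw [min_eq_left h2]
        rw [div_eq_div_iff (by positivity) (by positivity)]; ring
      simp only [hgdef, if_pos h1, if_pos h2]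
      rw [h5]
      linarith
    · by_cases h2 : (m:ℝ) ≤ κ
      · have h3 : Real.log ((m:ℝ) / κ) ≤ (m:ℝ)/κ - 1 :=
          Real.log_le_sub_one_of_pos (by positivity)
        rw [Real.log_div hm0.ne' hκ0.ne'] at h3
        have hκlt : κ < (m:ℝ) + 1 := by linarith [not_le.mp h1]
        have hA : ((1:ℝ) - (m:ℝ)/κ) + 1 - κ/((m:ℝ)+1) - 1/((m:ℝ)+1)
            = (κ - (m:ℝ)) * (((m:ℝ)+1) - κ) / (κ * ((m:ℝ)+1)) := by
          field_simp
          ring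
        have hA' : (0:ℝ) ≤ ((1:ℝ) - (m:ℝ)/κ) + 1 - κ/((m:ℝ)+1) - 1/((m:ℝ)+1) := by
          rw [hA]
          apply div_nonneg
          · apply mul_nonneg <;> linarith
          · positivity
        have h5 : min (m:ℝ) κ / ((m:ℝ) * ((m:ℝ)+1)) = 1 / ((m:ℝ)+1) := by
          rw [min_eq_left h2]
          rw [div_eq_div_iff (by positivity) (by positivity)]; ring
        simp only [hgdef, if_neg h1, if_pos h2]
        rw [h5]
        linarith
      · have h2' : κ ≤ (m:ℝ) := le_of_not_ge h2
        have h5 : min (m:ℝ) κ = κ := min_eq_right h2'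
        simp only [hgdef, if_neg h1, if_neg h2, h5]
        have : κ / ((m:ℝ) * ((m:ℝ)+1)) = (Real.log κ + 1 - κ/((m:ℝ)+1)) - (Real.log κ + 1 - κ/(m:ℝ)) := by
          field_simp
          ring
        linarith [this.le, this.ge]
  -- telescoping
  have tele : ∑ m ∈ Finset.Ico 1 N, (g ((m:ℝ) + 1) - g (m:ℝ)) = g N - g 1 := by
    have : ∀ m ∈ Finset.Ico 1 N, g ((m:ℝ) + 1) - g (m:ℝ)
        = (fun k : ℕ => g k) (m+1) - (fun k : ℕ => g k) m := by
      intro m _; push_cast; rfl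
    rw [Finset.sum_congr rfl this, Finset.sum_Ico_eq_sub _ hN1,
      Finset.sum_range_sub (fun k : ℕ => g k), Finset.sum_range_sub (fun k : ℕ => g k)]
    push_cast
    ring
  have hg1 : g 1 = 0 := by simp [hgdef, hκ1]
  have bound2 : g N + min (N:ℝ) κ / N ≤ Real.log κ + 1 := by
    by_cases hNκ : (N:ℝ) ≤ κ
    · have : g N = Real.log N := by simp [hgdef, hNκ]
      have h6 : Real.log (N:ℝ) ≤ Real.log κ := Real.log_le_log hN0 hNκ
      have h7 : min (N:ℝ) κ / N ≤ 1 := by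
        rw [div_le_one hN0]; exact min_le_left _ _
      linarith [this ▸ h6]
    · have hgN : g N = Real.log κ + 1 - κ / N := by simp [hgdef, hNκ]
      have h7 : min (N:ℝ) κ / N ≤ κ / N := by
        apply div_le_div_of_nonneg_right (min_le_right _ _) hN0.le
      rw [hgN]; linarith
  calc ∑ m ∈ Finset.Icc 1 N, χ m / m
      = ∑ m ∈ Finset.Ico 1 N, X m / (m * (m + 1)) + X N / N := abel N
    _ ≤ ∑ m ∈ Finset.Ico 1 N, min (m:ℝ) κ / (m * (m + 1)) + min (N:ℝ) κ / N := by
        apply add_le_add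
        · apply Finset.sum_le_sum
          intro m hm
          have hm1 := (Finset.mem_Ico.mp hm).1
          have hm0 : (0:ℝ) < m := by exact_mod_cast hm1
          apply div_le_div_of_nonneg_right (hXmin m) (by positivity)
        · exact div_le_div_of_nonneg_right (hXmin N) hN0.le
    _ ≤ ∑ m ∈ Finset.Ico 1 N, (g ((m:ℝ) + 1) - g (m:ℝ)) + min (N:ℝ) κ / N := by
        apply add_le_add_left
        apply Finset.sum_le_sum
        intro m hm
        exact key m (Finset.mem_Ico.mp hm).1
    _ = g N - g 1 + min (N:ℝ) κ / N := by rw [tele]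
    _ ≤ Real.log κ + 1 := by rw [hg1]; linarith [bound2]
    _ < Real.log κ + 2 := by linarith
end

section
/- Let ρ(d) be the number of roots of n² + 1 modulo d. Then for every real x ≥ 1, Σ_{d ≤ x} ρ(d) ≤ x. -/
open Finset

namespace Stmt12Aux

/-- The non-principal character mod 4, as an `ℤ`-valued function on `ℕ`. -/
def chi (n : ℕ) : ℤ := if n % 4 = 1 then 1 else if n % 4 = 3 then -1 else 0

lemma chi_mul (m n : ℕ) : chi (m * n) = chi m * chi n := by
  have hm : m % 4 = 0 ∨ m % 4 = 1 ∨ m % 4 = 2 ∨ m % 4 = 3 := by omega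
  have hn : n % 4 = 0 ∨ n % 4 = 1 ∨ n % 4 = 2 ∨ n % 4 = 3 := by omega
  unfold chi
  rw [Nat.mul_mod]
  rcases hm with h | h | h | h <;> rcases hn with h' | h' | h' | h' <;>
    simp [h, h']

lemma chi_pow (a j : ℕ) : chi (a ^ j) = chi a ^ j := by
  induction j with
  | zero => simp [chi]
  | succ k ih => rw [pow_succ, chi_mul, ih, pow_succ]

/-- ρ as an arithmetic function. -/
noncomputable def R : ArithmeticFunction ℤ :=
  ⟨fun d => (((Finset.range d).filter
      (fun m : ℕ => (d : ℤ) ∣ ((m : ℤ) ^ 2 + 1))).card : ℤ), by simp⟩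

/-- squarefree indicator. -/
noncomputable def F : ArithmeticFunction ℤ :=
  ⟨fun n => if Squarefree n then 1 else 0, by simp⟩

/-- χ₄ as an arithmetic function. -/
def G : ArithmeticFunction ℤ := ⟨chi, by simp [chi]⟩

lemma F_apply (n : ℕ) : F n = if Squarefree n then 1 else 0 := rfl
lemma G_apply (n : ℕ) : G n = chi n := rfl
lemma R_apply (d : ℕ) : R d = (((Finset.range d).filter
    (fun m : ℕ => (d : ℤ) ∣ ((m : ℤ) ^ 2 + 1))).card : ℤ) := rfl

/-- counting solutions in `ZMod d`. -/
noncomputable def cnt (d : ℕ) (hd : d ≠ 0) : ℕ :=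
  haveI : NeZero d := ⟨hd⟩
  (Finset.univ.filter (fun x : ZMod d => x ^ 2 + 1 = 0)).card

lemma R_eq_cnt (d : ℕ) (hd : d ≠ 0) : R d = (cnt d hd : ℤ) := by
  haveI : NeZero d := ⟨hd⟩
  rw [R_apply, cnt]
  congr 1
  apply Finset.card_nbij' (i := fun m : ℕ => (m : ZMod d)) (j := fun x : ZMod d => x.val)
  · intro m hm
    simp only [Finset.mem_coe, Finset.mem_filter, Finset.mem_range, Finset.mem_univ, true_and] at *
    obtain ⟨hmd, hdvd⟩ := hm
    have h : ((((m : ℤ) ^ 2 + 1 : ℤ)) : ZMod d) = (m : ZMod d) ^ 2 + 1 := by push_cast; ring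
    rw [← h, ZMod.intCast_zmod_eq_zero_iff_dvd]
    exact hdvd
  · intro x hx
    simp only [Finset.mem_coe, Finset.mem_filter, Finset.mem_univ, true_and, Finset.mem_range] at *
    refine ⟨ZMod.val_lt x, ?_⟩
    rw [← ZMod.intCast_zmod_eq_zero_iff_dvd]
    have h : ((((x.val : ℤ) ^ 2 + 1 : ℤ)) : ZMod d) = (x.val : ZMod d) ^ 2 + 1 := by
      push_cast; ring
    rw [h, ZMod.natCast_val, ZMod.cast_id]
    exact hx
  · intro m hm
    simp only [Finset.mem_coe, Finset.mem_filter, Finset.mem_range] at hm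
    exact ZMod.val_natCast_of_lt hm.1
  · intro x _
    simp [ZMod.natCast_val, ZMod.cast_id]

lemma cnt_one (h : (1 : ℕ) ≠ 0) : cnt 1 h = 1 := by
  haveI : NeZero (1 : ℕ) := ⟨h⟩
  rw [cnt]
  rw [Finset.filter_true_of_mem (fun x _ => Subsingleton.elim _ _)]
  simp

lemma cnt_mul {m n : ℕ} (hm : m ≠ 0) (hn : n ≠ 0) (hmn : m * n ≠ 0) (h : m.Coprime n) :
    cnt (m * n) hmn = cnt m hm * cnt n hn := by
  haveI : NeZero m := ⟨hm⟩
  haveI : NeZero n := ⟨hn⟩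
  haveI : NeZero (m * n) := ⟨hmn⟩
  have key1 : cnt (m * n) hmn = Fintype.card {x : ZMod (m * n) // x ^ 2 + 1 = 0} := by
    rw [cnt, Fintype.card_subtype]
  have key2 : cnt m hm = Fintype.card {x : ZMod m // x ^ 2 + 1 = 0} := by
    rw [cnt, Fintype.card_subtype]
  have key3 : cnt n hn = Fintype.card {x : ZMod n // x ^ 2 + 1 = 0} := by
    rw [cnt, Fintype.card_subtype]
  rw [key1, key2, key3]
  have e1 : {x : ZMod (m * n) // x ^ 2 + 1 = 0} ≃
      {y : ZMod m × ZMod n // y.1 ^ 2 + 1 = 0 ∧ y.2 ^ 2 + 1 = 0} := by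
    refine (ZMod.chineseRemainder h).toEquiv.subtypeEquiv fun x => ?_
    have hco : ((ZMod.chineseRemainder h).toEquiv x) = (ZMod.chineseRemainder h) x := rfl
    rw [hco]
    have hphi : (ZMod.chineseRemainder h) (x ^ 2 + 1) =
        (ZMod.chineseRemainder h) x ^ 2 + 1 := by
      rw [map_add, map_pow, map_one]
    constructor
    · intro hx
      have h0 : (ZMod.chineseRemainder h) (x ^ 2 + 1) = 0 := by rw [hx, map_zero]
      rw [hphi] at h0
      constructor
      · have := congrArg Prod.fst h0; simpa using this
      · have := congrArg Prod.snd h0; simpa using this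
    · intro ⟨h1, h2⟩
      have h0 : (ZMod.chineseRemainder h) (x ^ 2 + 1) = 0 := by
        rw [hphi]
        have hpair : ((ZMod.chineseRemainder h) x ^ 2 + 1) =
            (((ZMod.chineseRemainder h) x).1 ^ 2 + 1,
             ((ZMod.chineseRemainder h) x).2 ^ 2 + 1) := by
          ext <;> simp
        rw [hpair, h1, h2]
        rfl
      have h0' : (ZMod.chineseRemainder h) (x ^ 2 + 1) = (ZMod.chineseRemainder h) 0 := by
        rw [h0, map_zero]
      exact (ZMod.chineseRemainder h).injective h0'
  have e2 : {y : ZMod m × ZMod n // y.1 ^ 2 + 1 = 0 ∧ y.2 ^ 2 + 1 = 0} ≃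
      {a : ZMod m // a ^ 2 + 1 = 0} × {b : ZMod n // b ^ 2 + 1 = 0} :=
    Equiv.subtypeProdEquivProd (p := fun a : ZMod m => a ^ 2 + 1 = 0)
      (q := fun b : ZMod n => b ^ 2 + 1 = 0)
  rw [Fintype.card_congr (e1.trans e2), Fintype.card_prod]

lemma R_isMult : R.IsMultiplicative := by
  constructor
  · rw [R_eq_cnt 1 one_ne_zero, cnt_one]; rfl
  · intro m n h
    rcases eq_or_ne m 0 with rfl | hm
    · have h1 : n = 1 := Nat.coprime_zero_left n |>.mp h
      subst h1; simp [R_apply]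
    rcases eq_or_ne n 0 with rfl | hn
    · have h1 : m = 1 := Nat.coprime_zero_right m |>.mp h
      subst h1; simp [R_apply]
    have hmn : m * n ≠ 0 := mul_ne_zero hm hn
    rw [R_eq_cnt (m * n) hmn, R_eq_cnt m hm, R_eq_cnt n hn, cnt_mul hm hn hmn h]
    push_cast
    ring

lemma F_isMult : F.IsMultiplicative := by
  constructor
  · simp [F_apply]
  · intro m n h
    by_cases h1 : Squarefree m <;> by_cases h2 : Squarefree n <;>
      simp [F_apply, Nat.squarefree_mul_iff, h, h1, h2]

lemma G_isMult : G.IsMultiplicative := by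
  constructor
  · simp [G_apply, chi]
  · intro m n _
    rw [G_apply, G_apply, G_apply, chi_mul]

/-- existence of square roots of -1 mod p^k for p ≡ 1 mod 4 -/
lemma exists_root {p : ℕ} (hp : p.Prime) (h1 : p % 4 = 1) (k : ℕ) :
    ∃ m : ℤ, (p : ℤ) ^ k ∣ m ^ 2 + 1 := by
  haveI : Fact p.Prime := ⟨hp⟩
  induction k with
  | zero => exact ⟨0, by simp⟩
  | succ j ih =>
    rcases eq_or_ne j 0 with rfl | hj
    · -- base case : k = 1
      obtain ⟨y, hy⟩ := ZMod.exists_sq_eq_neg_one_iff.mpr (by omega : p % 4 ≠ 3)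
      refine ⟨(y.val : ℤ), ?_⟩
      have h2 : ((((y.val : ℤ) ^ 2 + 1 : ℤ)) : ZMod p) = 0 := by
        push_cast
        rw [ZMod.natCast_val, ZMod.cast_id]
        rw [show y ^ 2 = y * y from sq y, ← hy]
        ring
      rw [zero_add, pow_one]
      exact (ZMod.intCast_zmod_eq_zero_iff_dvd _ _).mp h2
    · obtain ⟨m, c, hc⟩ := ih
      have hpm : ¬ (p : ℤ) ∣ m := by
        intro hdvd
        have h2 : (p : ℤ) ∣ m ^ 2 + 1 := by
          rw [hc]; exact Dvd.dvd.mul_right (dvd_pow_self _ hj) c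
        have h3 : (p : ℤ) ∣ m ^ 2 := by rw [sq]; exact hdvd.mul_right m
        have h4 : (p : ℤ) ∣ 1 := by simpa using dvd_sub h2 h3
        have h5 := Int.le_of_dvd one_pos h4
        have h6 := hp.two_le
        omega
      have hp2 : ¬ (p : ℤ) ∣ 2 := by
        intro h4
        have h5 : (p : ℕ) ∣ 2 := by exact_mod_cast h4
        have := (Nat.prime_dvd_prime_iff_eq hp Nat.prime_two).mp h5
        omega
      have hprime : Prime (p : ℤ) := Int.prime_iff_natAbs_prime.mpr (by simpa using hp)
      have hcop : IsCoprime (p : ℤ) (2 * m) := by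
        rw [Prime.coprime_iff_not_dvd hprime]
        intro h4
        rcases hprime.dvd_mul.mp h4 with h5 | h5
        · exact hp2 h5
        · exact hpm h5
      obtain ⟨a, b, hab⟩ := hcop
      obtain ⟨i, rfl⟩ : ∃ i, j = i + 1 := ⟨j - 1, by omega⟩
      refine ⟨m - c * b * (p : ℤ) ^ (i + 1),
        c * a + (c * b) ^ 2 * (p : ℤ) ^ i, ?_⟩
      linear_combination hc - ((p : ℤ) ^ (i + 1) * c) * hab

/-- exactly two square roots of -1 mod p^k for odd p when one exists -/
lemma cnt_prime_pow_one {p : ℕ} (hp : p.Prime) (h1 : p % 4 = 1) {k : ℕ} (hk : k ≠ 0)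
    (hd : p ^ k ≠ 0) : cnt (p ^ k) hd = 2 := by
  haveI : Fact p.Prime := ⟨hp⟩
  haveI : NeZero (p ^ k) := ⟨pow_ne_zero k hp.pos.ne'⟩
  have hp2 : p ≠ 2 := by intro h; rw [h] at h1; omega
  have hprime : Prime (p : ℤ) := Int.prime_iff_natAbs_prime.mpr (by simpa using hp)
  -- get a root x₀ in ZMod (p^k)
  obtain ⟨m, hmdvd⟩ := exists_root hp h1 k
  set x₀ : ZMod (p ^ k) := ((m : ℤ) : ZMod (p ^ k)) with hx₀def
  have hx₀ : x₀ ^ 2 + 1 = 0 := by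
    have : (((m ^ 2 + 1 : ℤ)) : ZMod (p ^ k)) = 0 := by
      rw [ZMod.intCast_zmod_eq_zero_iff_dvd]
      exact_mod_cast hmdvd
    rw [hx₀def]; push_cast at this ⊢; linear_combination this
  -- x₀ ≠ -x₀
  have hne : x₀ ≠ -x₀ := by
    intro h
    have h20 : 2 * x₀ = 0 := by rw [two_mul]; nth_rewrite 2 [h]; ring
    have h4 : ((4 : ℕ) : ZMod (p ^ k)) = 0 := by
      push_cast
      linear_combination (4 : ZMod (p ^ k)) * hx₀ - (2 * x₀) * h20
    rw [ZMod.natCast_eq_zero_iff] at h4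
    have h5 : p ∣ 4 := dvd_trans (dvd_pow_self p hk) h4
    have h6 : p ∣ 2 := hp.dvd_of_dvd_pow (show p ∣ 2 ^ 2 by norm_num; exact h5)
    have := (Nat.prime_dvd_prime_iff_eq hp Nat.prime_two).mp h6
    omega
  -- the solution set is {x₀, -x₀}
  have hset : (Finset.univ.filter (fun x : ZMod (p ^ k) => x ^ 2 + 1 = 0)) = {x₀, -x₀} := by
    ext x
    simp only [Finset.mem_filter, Finset.mem_univ, true_and, Finset.mem_insert,
      Finset.mem_singleton]
    constructor
    · intro hx
      -- lift to ℤ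
      set A : ℤ := (x.val : ℤ) with hA
      set B : ℤ := (x₀.val : ℤ) with hB
      have hcastA : ((A : ℤ) : ZMod (p ^ k)) = x := by
        rw [hA]; push_cast; rw [ZMod.natCast_val, ZMod.cast_id]
      have hcastB : ((B : ℤ) : ZMod (p ^ k)) = x₀ := by
        rw [hB]; push_cast; rw [ZMod.natCast_val, ZMod.cast_id]
      have hdvd : ((p : ℤ)) ^ k ∣ (A - B) * (A + B) := by
        have h' : (((A - B) * (A + B) : ℤ) : ZMod (p ^ k)) = 0 := by
          push_cast
          rw [hcastA, hcastB]
          linear_combination hx - hx₀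
        have h'' := (ZMod.intCast_zmod_eq_zero_iff_dvd _ _).mp h'
        exact_mod_cast h''
      have hdvdA : (p : ℤ) ∣ A ^ 2 + 1 := by
        have h' : (((A ^ 2 + 1 : ℤ)) : ZMod (p ^ k)) = 0 := by
          push_cast
          rw [hcastA]
          linear_combination hx
        have h'' := (ZMod.intCast_zmod_eq_zero_iff_dvd _ _).mp h'
        have h3 : ((p : ℤ)) ^ k ∣ A ^ 2 + 1 := by exact_mod_cast h''
        exact dvd_trans (dvd_pow_self _ hk) h3
      have hpA : ¬ (p : ℤ) ∣ A := by
        intro hdA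
        have h3 : (p : ℤ) ∣ A ^ 2 := by rw [sq]; exact hdA.mul_right A
        have h4 : (p : ℤ) ∣ 1 := by simpa using dvd_sub hdvdA h3
        have h5 := Int.le_of_dvd one_pos h4
        have h6 := hp.two_le
        omega
      have hnotboth : ¬ ((p : ℤ) ∣ A - B ∧ (p : ℤ) ∣ A + B) := by
        rintro ⟨hd1, hd2⟩
        have h2A : (p : ℤ) ∣ 2 * A := by
          have hsum := dvd_add hd1 hd2
          have e : (A - B) + (A + B) = 2 * A := by ring
          rwa [e] at hsum
        rcases hprime.dvd_mul.mp h2A with h5 | h5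
        · have h5' : (p : ℕ) ∣ 2 := by exact_mod_cast h5
          have := (Nat.prime_dvd_prime_iff_eq hp Nat.prime_two).mp h5'
          omega
        · exact hpA h5
      by_cases hcase : (p : ℤ) ∣ A - B
      · -- then p does not divide A + B, so p^k ∣ A - B
        have hnd : ¬ (p : ℤ) ∣ A + B := fun hd => hnotboth ⟨hcase, hd⟩
        have hcop : IsCoprime ((p : ℤ) ^ k) (A + B) :=
          (Prime.coprime_iff_not_dvd hprime |>.mpr hnd).pow_left
        have hdAB : ((p : ℤ)) ^ k ∣ A - B := hcop.dvd_of_dvd_mul_right hdvd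
        left
        have h0 : (((A - B : ℤ)) : ZMod (p ^ k)) = 0 := by
          rw [ZMod.intCast_zmod_eq_zero_iff_dvd]; exact_mod_cast hdAB
        push_cast at h0
        rw [hcastA, hcastB] at h0
        exact sub_eq_zero.mp h0
      · have hcop : IsCoprime ((p : ℤ) ^ k) (A - B) :=
          (Prime.coprime_iff_not_dvd hprime |>.mpr hcase).pow_left
        have hABdvd : ((p : ℤ)) ^ k ∣ A + B := hcop.dvd_of_dvd_mul_left hdvd
        right
        have h0 : (((A + B : ℤ)) : ZMod (p ^ k)) = 0 := by
          rw [ZMod.intCast_zmod_eq_zero_iff_dvd]; exact_mod_cast hABdvd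
        push_cast at h0
        rw [hcastA, hcastB] at h0
        exact eq_neg_of_add_eq_zero_left h0
    · intro hx
      rcases hx with rfl | rfl
      · exact hx₀
      · rw [neg_pow, neg_one_sq]; simpa using hx₀
  rw [cnt]
  rw [hset]
  rw [Finset.card_insert_of_notMem (by simpa using hne), Finset.card_singleton]


lemma R_two : R 2 = 1 := by
  rw [R_apply]
  have h : ((Finset.range 2).filter
      (fun m : ℕ => ((2 : ℕ) : ℤ) ∣ ((m : ℤ) ^ 2 + 1))) = {1} := by
    decide
  rw [h]
  simp

lemma R_two_pow {k : ℕ} (hk : 2 ≤ k) : R (2 ^ k) = 0 := by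
  rw [R_apply, Nat.cast_eq_zero, Finset.card_eq_zero, Finset.filter_eq_empty_iff]
  intro m _
  intro hdvd
  have h4 : (4 : ℤ) ∣ (m : ℤ) ^ 2 + 1 := by
    refine dvd_trans ?_ hdvd
    push_cast
    calc (4 : ℤ) = 2 ^ 2 := by norm_num
      _ ∣ 2 ^ k := pow_dvd_pow 2 hk
  rcases Int.even_or_odd (m : ℤ) with ⟨q, hq⟩ | ⟨q, hq⟩
  · rw [hq] at h4
    have h2 : (4 : ℤ) ∣ (q + q) ^ 2 := ⟨q ^ 2, by ring⟩
    have := (dvd_add_right h2).mp h4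
    norm_num at this
  · rw [hq] at h4
    have h2 : (2 * q + 1) ^ 2 + 1 = 4 * (q ^ 2 + q) + 2 := by ring
    rw [h2] at h4
    have h3 : (4 : ℤ) ∣ 4 * (q ^ 2 + q) := ⟨q ^ 2 + q, rfl⟩
    have := (dvd_add_right h3).mp h4
    norm_num at this

lemma R_three_pow {p : ℕ} (hp : p.Prime) (h3 : p % 4 = 3) {k : ℕ} (hk : k ≠ 0) :
    R (p ^ k) = 0 := by
  haveI : Fact p.Prime := ⟨hp⟩
  rw [R_apply, Nat.cast_eq_zero, Finset.card_eq_zero, Finset.filter_eq_empty_iff]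
  intro m _
  intro hdvd
  have hpd : (p : ℤ) ∣ (m : ℤ) ^ 2 + 1 := by
    refine dvd_trans ?_ hdvd
    push_cast
    exact dvd_pow_self _ hk
  have h0 : (((m : ℤ) ^ 2 + 1 : ℤ) : ZMod p) = 0 :=
    (ZMod.intCast_zmod_eq_zero_iff_dvd _ _).mpr hpd
  push_cast at h0
  have hsq : IsSquare (-1 : ZMod p) := ⟨(m : ZMod p), by linear_combination -h0⟩
  rw [ZMod.exists_sq_eq_neg_one_iff] at hsq
  exact hsq h3

lemma R_one_pow {p : ℕ} (hp : p.Prime) (h1 : p % 4 = 1) {k : ℕ} (hk : k ≠ 0) :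
    R (p ^ k) = 2 := by
  have hd : p ^ k ≠ 0 := pow_ne_zero k hp.pos.ne'
  rw [R_eq_cnt (p ^ k) hd, cnt_prime_pow_one hp h1 hk hd]
  rfl

lemma FG_prime_pow {p : ℕ} (hp : p.Prime) {i : ℕ} (hi : 1 ≤ i) :
    (F * G) (p ^ i) = chi (p ^ i) + chi (p ^ (i - 1)) := by
  rw [ArithmeticFunction.mul_apply,
    Nat.sum_divisorsAntidiagonal (fun a b => F a * G b),
    Nat.divisors_prime_pow hp, Finset.sum_map]
  simp only [Function.Embedding.coeFn_mk]
  have hterm : ∀ j ∈ Finset.range (i + 1),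
      F (p ^ j) * G (p ^ i / p ^ j) =
        (if j = 0 then chi (p ^ i) else 0) + (if j = 1 then chi (p ^ (i - 1)) else 0) := by
    intro j hj
    simp only [Finset.mem_range] at hj
    have hdiv : p ^ i / p ^ j = p ^ (i - j) := Nat.pow_div (by omega) hp.pos
    rw [hdiv]
    match j with
    | 0 =>
      have : Squarefree 1 := squarefree_one
      simp [F_apply, G_apply, this]
    | 1 =>
      have : Squarefree p := hp.squarefree
      simp [F_apply, G_apply, this]
    | (j + 2) =>
      have hns : ¬ Squarefree (p ^ (j + 2)) := by
        rw [Nat.squarefree_pow_iff hp.ne_one (by omega)]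
        rintro ⟨-, h⟩
        omega
      simp [F_apply, hns]
  rw [Finset.sum_congr rfl hterm, Finset.sum_add_distrib,
    Finset.sum_ite_eq' (Finset.range (i + 1)) 0,
    Finset.sum_ite_eq' (Finset.range (i + 1)) 1]
  have h0 : (0 : ℕ) ∈ Finset.range (i + 1) := by simp
  have h1 : (1 : ℕ) ∈ Finset.range (i + 1) := by simp [Nat.lt_succ_iff]; omega
  rw [if_pos h0, if_pos h1]

lemma R_eq_FG : R = F * G := by
  rw [ArithmeticFunction.IsMultiplicative.eq_iff_eq_on_prime_powers R R_isMult (F * G)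
    (F_isMult.mul G_isMult)]
  intro p i hp
  rcases Nat.eq_zero_or_pos i with rfl | hi
  · simp only [pow_zero]
    rw [R_isMult.1, (F_isMult.mul G_isMult).1]
  rw [FG_prime_pow hp hi]
  by_cases hp2 : p = 2
  · subst hp2
    rcases eq_or_lt_of_le (show 1 ≤ i from hi) with h | h
    · rw [← h]
      norm_num
      rw [R_two]
      simp [chi]
    · have h2 : 2 ≤ i := h
      rw [R_two_pow h2, chi_pow, chi_pow]
      have hc2 : chi 2 = 0 := by simp [chi]
      rw [hc2, zero_pow (by omega : i ≠ 0), zero_pow (by omega : i - 1 ≠ 0)]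
      ring
  · have hodd : p % 2 = 1 := (Nat.Prime.eq_two_or_odd hp).resolve_left hp2
    have h14 : p % 4 = 1 ∨ p % 4 = 3 := by omega
    rcases h14 with h1 | h3
    · rw [R_one_pow hp h1 (by omega), chi_pow, chi_pow]
      have hc : chi p = 1 := by simp [chi, h1]
      rw [hc, one_pow, one_pow]
      norm_num
    · obtain ⟨j, rfl⟩ : ∃ j, i = j + 1 := ⟨i - 1, by omega⟩
      rw [R_three_pow hp h3 (by omega), chi_pow, chi_pow]
      have hc : chi p = -1 := by simp [chi, h3]
      rw [hc, Nat.add_sub_cancel, pow_succ]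
      ring

lemma sum_chi (M : ℕ) :
    ∑ b ∈ Finset.Icc 1 M, chi b = if M % 4 = 1 ∨ M % 4 = 2 then 1 else 0 := by
  induction M with
  | zero => simp
  | succ M ih =>
    rw [Finset.sum_Icc_succ_top (by omega : 1 ≤ M + 1), ih]
    have h : M % 4 = 0 ∨ M % 4 = 1 ∨ M % 4 = 2 ∨ M % 4 = 3 := by omega
    rcases h with h | h | h | h
    · have h' : (M + 1) % 4 = 1 := by omega
      simp [chi, h, h']
    · have h' : (M + 1) % 4 = 2 := by omega
      simp [chi, h, h']
    · have h' : (M + 1) % 4 = 3 := by omega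
      simp [chi, h, h']
    · have h' : (M + 1) % 4 = 0 := by omega
      simp [chi, h, h']

lemma swap (N : ℕ) :
    ∑ d ∈ Finset.Icc 1 N, (F * G) d =
      ∑ a ∈ Finset.Icc 1 N, F a * ∑ b ∈ Finset.Icc 1 (N / a), chi b := by
  simp only [ArithmeticFunction.mul_apply, Finset.mul_sum]
  rw [Finset.sum_sigma', Finset.sum_sigma']
  apply Finset.sum_nbij' (i := fun x : Σ _ : ℕ, ℕ × ℕ => (⟨x.2.1, x.2.2⟩ : Σ _ : ℕ, ℕ))
    (j := fun y : Σ _ : ℕ, ℕ => (⟨y.1 * y.2, (y.1, y.2)⟩ : Σ _ : ℕ, ℕ × ℕ))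
  · rintro ⟨d, a, b⟩ hx
    simp only [Finset.mem_sigma, Finset.mem_Icc, Nat.mem_divisorsAntidiagonal] at hx ⊢
    obtain ⟨⟨hd1, hdN⟩, hab, hd0⟩ := hx
    have ha0 : a ≠ 0 := by rintro rfl; simp at hab; omega
    have hb0 : b ≠ 0 := by rintro rfl; simp at hab; omega
    refine ⟨⟨by omega, ?_⟩, by omega, ?_⟩
    · calc a ≤ a * b := Nat.le_mul_of_pos_right a (by omega)
        _ = d := hab
        _ ≤ N := hdN
    · rw [Nat.le_div_iff_mul_le (by omega : 0 < a)]
      calc b * a = a * b := by ring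
        _ = d := hab
        _ ≤ N := hdN
  · rintro ⟨a, b⟩ hy
    simp only [Finset.mem_sigma, Finset.mem_Icc] at hy
    obtain ⟨⟨ha1, haN⟩, hb1, hbNa⟩ := hy
    have habN : a * b ≤ N := by
      rw [Nat.le_div_iff_mul_le (by omega : 0 < a)] at hbNa
      calc a * b = b * a := Nat.mul_comm a b
        _ ≤ N := hbNa
    refine Finset.mem_sigma.mpr ⟨Finset.mem_Icc.mpr ⟨?_, habN⟩,
      Nat.mem_divisorsAntidiagonal.mpr ⟨rfl, ?_⟩⟩
    · show 1 ≤ a * b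
      exact Nat.mul_pos (by omega) (by omega)
    · show a * b ≠ 0
      exact (Nat.mul_pos (by omega : 0 < a) (by omega : 0 < b)).ne'
  · rintro ⟨d, a, b⟩ hx
    simp only [Finset.mem_sigma, Finset.mem_Icc, Nat.mem_divisorsAntidiagonal] at hx
    obtain ⟨-, hab, -⟩ := hx
    subst hab
    rfl
  · rintro ⟨a, b⟩ _
    rfl
  · rintro ⟨d, a, b⟩ _
    rfl

end Stmt12Aux

theorem stmt_12 (ρ : ℕ → ℕ)
    (hρ : ∀ d : ℕ, ρ d = ((Finset.range d).filter
      (fun m : ℕ => (d : ℤ) ∣ ((m : ℤ) ^ 2 + 1))).card)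
    (x : ℝ) (hx : 1 ≤ x) :
    ∑ d ∈ Finset.Icc 1 ⌊x⌋₊, (ρ d : ℝ) ≤ x := by
  classical
  set N := ⌊x⌋₊ with hN
  have hNx : (N : ℝ) ≤ x := Nat.floor_le (le_trans zero_le_one hx)
  have hInt : ∑ d ∈ Finset.Icc 1 N, Stmt12Aux.R d ≤ (N : ℤ) := by
    rw [Stmt12Aux.R_eq_FG, Stmt12Aux.swap]
    calc ∑ a ∈ Finset.Icc 1 N, Stmt12Aux.F a * ∑ b ∈ Finset.Icc 1 (N / a), Stmt12Aux.chi b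
        ≤ ∑ _a ∈ Finset.Icc 1 N, (1 : ℤ) := by
          apply Finset.sum_le_sum
          intro a _
          rw [Stmt12Aux.F_apply, Stmt12Aux.sum_chi]
          by_cases h1 : Squarefree a <;>
            by_cases h2 : ((N / a) % 4 = 1 ∨ (N / a) % 4 = 2) <;>
            simp [h1, h2]
      _ = (N : ℤ) := by
          rw [Finset.sum_const, Nat.card_Icc]
          simp
  have hcast : ∑ d ∈ Finset.Icc 1 N, (ρ d : ℝ)
      = ((∑ d ∈ Finset.Icc 1 N, Stmt12Aux.R d : ℤ) : ℝ) := by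
    push_cast
    apply Finset.sum_congr rfl
    intro d _
    rw [hρ d, Stmt12Aux.R_apply]
    push_cast
    ring
  rw [hcast]
  calc ((∑ d ∈ Finset.Icc 1 N, Stmt12Aux.R d : ℤ) : ℝ) ≤ (N : ℝ) := by exact_mod_cast hInt
    _ ≤ x := hNx
end

section
/- Let f : ℕ → ℕ be positive and non-decreasing with f(n) never a perfect square, and let ρ(d) = #{0 ≤ m < d : f(m) ≡ 0 (mod d)} where f is a polynomial with integer coefficients (so divisibility is periodic modulo d). Then for any N ≥ 1, Σ_{n ≤ N} τ(f(n)) ≤ 2N·Σ_{d ≤ √(f(N))} ρ(d)/d + 2·Σ_{d ≤ √(f(N))} ρ(d). -/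
open Finset

/-- Every positive integer `m ≤ K` has at most twice as many divisors as it has
divisors in `[1, D]`, provided every `d` with `d * d ≤ K` satisfies `d ≤ D`. -/
private lemma divisor_pair_bound (m K D : ℕ) (hm : 0 < m) (hmK : m ≤ K)
    (hD : ∀ d : ℕ, d * d ≤ K → d ≤ D) :
    m.divisors.card ≤ 2 * ((Finset.Icc 1 D).filter (· ∣ m)).card := by
  classical
  have hsplit : (m.divisors.filter (fun d => d * d ≤ m)).card
      + (m.divisors.filter (fun d => ¬ d * d ≤ m)).card = m.divisors.card :=
    Finset.card_filter_add_card_filter_not _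
  have hTS : (m.divisors.filter (fun d => ¬ d * d ≤ m)).card
      ≤ (m.divisors.filter (fun d => d * d ≤ m)).card := by
    apply Finset.card_le_card_of_injOn (fun d => m / d)
    · intro d hd
      simp only [Finset.mem_coe, Finset.mem_filter, Nat.mem_divisors] at hd ⊢
      obtain ⟨⟨hdvd, hm0⟩, hlt⟩ := hd
      have hlt' : m / d < d := Nat.div_lt_of_lt_mul (by omega)
      refine ⟨⟨Nat.div_dvd_of_dvd hdvd, hm0⟩, ?_⟩
      calc m / d * (m / d) ≤ m / d * d := Nat.mul_le_mul_left _ (le_of_lt hlt')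
        _ = m := Nat.div_mul_cancel hdvd
    · intro d1 h1 d2 h2 heq
      simp only [Finset.mem_coe, Finset.mem_filter, Nat.mem_divisors] at h1 h2
      have e1 := Nat.div_div_self h1.1.1 hm.ne'
      have e2 := Nat.div_div_self h2.1.1 hm.ne'
      simp only at heq
      rw [← e1, ← e2, heq]
  have hsub : (m.divisors.filter (fun d => d * d ≤ m))
      ⊆ (Finset.Icc 1 D).filter (· ∣ m) := by
    intro d hd
    simp only [Finset.mem_filter, Nat.mem_divisors, Finset.mem_Icc] at hd ⊢
    obtain ⟨⟨hdvd, hm0⟩, hsq⟩ := hd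
    exact ⟨⟨Nat.pos_of_dvd_of_pos hdvd hm, hD d (hsq.trans hmK)⟩, hdvd⟩
  have := Finset.card_le_card hsub
  omega

/-- Counting multiples: at most `N / d + 1` elements of `[1, N]` in a fixed
residue class mod `d`. -/
private lemma residue_count (N d r : ℕ) (hd : 0 < d) :
    ((Finset.Icc 1 N).filter (fun n => n % d = r)).card ≤ N / d + 1 := by
  classical
  have : ((Finset.Icc 1 N).filter (fun n => n % d = r)).card
      ≤ (Finset.range (N / d + 1)).card := by
    apply Finset.card_le_card_of_injOn (fun n => n / d)
    · intro n hn
      simp only [Finset.mem_coe, Finset.mem_filter, Finset.mem_Icc] at hn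
      simp only [Finset.mem_coe, Finset.mem_range]
      have : n / d ≤ N / d := Nat.div_le_div_right hn.1.2
      omega
    · intro n1 h1 n2 h2 heq
      simp only [Finset.mem_coe, Finset.mem_filter, Finset.mem_Icc] at h1 h2
      simp only at heq
      have e1 := Nat.div_add_mod n1 d
      have e2 := Nat.div_add_mod n2 d
      rw [h1.2] at e1
      rw [h2.2] at e2
      rw [heq] at e1
      omega
  simpa using this

theorem stmt_18 (b c : ℤ)
    (hpos : ∀ n : ℕ, 1 ≤ n → 0 < (n : ℤ) ^ 2 + 2 * b * n + c)
    (hmono : ∀ n : ℕ, 1 ≤ n →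
      (n : ℤ) ^ 2 + 2 * b * n + c ≤ ((n : ℤ) + 1) ^ 2 + 2 * b * ((n : ℤ) + 1) + c)
    (hnsq : ∀ n : ℕ, 1 ≤ n → ¬ IsSquare ((n : ℤ) ^ 2 + 2 * b * n + c))
    (ρ : ℕ → ℕ)
    (hρ : ∀ d : ℕ, ρ d = ((Finset.range d).filter
      (fun m : ℕ => (d : ℤ) ∣ ((m : ℤ) ^ 2 + 2 * b * m + c))).card)
    (N : ℕ) (hN : 1 ≤ N) :
    (∑ n ∈ Finset.Icc 1 N,
      ((((n : ℤ) ^ 2 + 2 * b * n + c).toNat.divisors.card : ℝ))) ≤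
      2 * N * ∑ d ∈ Finset.Icc 1 ⌊Real.sqrt ((((N : ℤ) ^ 2 + 2 * b * N + c : ℤ) : ℝ))⌋₊,
        (ρ d : ℝ) / d
      + 2 * ∑ d ∈ Finset.Icc 1 ⌊Real.sqrt ((((N : ℤ) ^ 2 + 2 * b * N + c : ℤ) : ℝ))⌋₊,
        (ρ d : ℝ) := by
  classical
  set f : ℕ → ℤ := fun n => (n : ℤ) ^ 2 + 2 * b * n + c with hf
  -- monotonicity
  have hmono' : ∀ n k : ℕ, 1 ≤ n → n ≤ k → f n ≤ f k := by
    intro n k hn hnk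
    induction k, hnk using Nat.le_induction with
    | base => exact le_rfl
    | succ k hk ih =>
      refine le_trans ih ?_
      have h2 := hmono k (le_trans hn hk)
      show f k ≤ f (k + 1)
      simp only [hf]
      push_cast
      linarith
  set D : ℕ := ⌊Real.sqrt (((f N : ℤ) : ℝ))⌋₊ with hD
  -- positivity of all values, and hence toNat facts
  have hfpos : ∀ n : ℕ, 1 ≤ n → 0 < f n := fun n hn => hpos n hn
  -- key: d*d ≤ (f N).toNat → d ≤ D
  have hKD : ∀ d : ℕ, d * d ≤ (f N).toNat → d ≤ D := by
    intro d hd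
    rw [hD]
    apply Nat.le_floor
    rw [Real.le_sqrt (by positivity) (by exact_mod_cast (hfpos N hN).le)]
    have h1 : ((d * d : ℕ) : ℤ) ≤ f N := by
      rw [← Int.toNat_of_nonneg (hfpos N hN).le]; exact_mod_cast hd
    have h2 : ((d * d : ℕ) : ℝ) ≤ ((f N : ℤ) : ℝ) := by exact_mod_cast h1
    push_cast at h2 ⊢
    nlinarith
  -- periodicity of divisibility
  have hper : ∀ d n : ℕ, ((d : ℤ) ∣ f n ↔ (d : ℤ) ∣ f (n % d)) := by
    intro d n
    have hmodeq : (n : ℤ) ≡ ((n % d : ℕ) : ℤ) [ZMOD (d : ℤ)] := by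
      show (n : ℤ) % d = ((n % d : ℕ) : ℤ) % d
      rw [Int.natCast_mod, Int.emod_emod_of_dvd _ dvd_rfl]
    have hcong : f n ≡ f (n % d) [ZMOD (d : ℤ)] := by
      simp only [hf]
      exact ((hmodeq.pow 2).add ((Int.ModEq.refl (2 * b)).mul hmodeq)).add
        (Int.ModEq.refl c)
    constructor
    · intro h
      exact Int.modEq_zero_iff_dvd.mp (hcong.symm.trans (Int.modEq_zero_iff_dvd.mpr h))
    · intro h
      exact Int.modEq_zero_iff_dvd.mp (hcong.trans (Int.modEq_zero_iff_dvd.mpr h))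
  -- count of n in [1,N] with d ∣ f n
  have hcount : ∀ d : ℕ, 1 ≤ d →
      ((Finset.Icc 1 N).filter (fun n => (d : ℤ) ∣ f n)).card ≤ ρ d * (N / d + 1) := by
    intro d hd
    have hmap : ∀ n ∈ (Finset.Icc 1 N).filter (fun n => (d : ℤ) ∣ f n),
        n % d ∈ (Finset.range d).filter (fun m : ℕ => (d : ℤ) ∣ f m) := by
      intro n hn
      simp only [Finset.mem_filter, Finset.mem_Icc, Finset.mem_range] at hn ⊢
      exact ⟨Nat.mod_lt _ hd, (hper d n).mp hn.2⟩
    rw [Finset.card_eq_sum_card_fiberwise hmap]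
    calc ∑ r ∈ (Finset.range d).filter (fun m : ℕ => (d : ℤ) ∣ f m),
          (((Finset.Icc 1 N).filter (fun n => (d : ℤ) ∣ f n)).filter
            (fun n => n % d = r)).card
        ≤ ∑ r ∈ (Finset.range d).filter (fun m : ℕ => (d : ℤ) ∣ f m), (N / d + 1) := by
          apply Finset.sum_le_sum
          intro r _
          refine le_trans (Finset.card_le_card ?_) (residue_count N d r hd)
          intro n hn
          simp only [Finset.mem_filter, Finset.mem_Icc] at hn ⊢
          exact ⟨hn.1.1, hn.2⟩
      _ = ρ d * (N / d + 1) := by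
          rw [Finset.sum_const, smul_eq_mul, hρ d]
  -- per-n divisor bound
  have hdiv : ∀ n ∈ Finset.Icc 1 N,
      (f n).toNat.divisors.card ≤ 2 * ((Finset.Icc 1 D).filter (· ∣ (f n).toNat)).card := by
    intro n hn
    simp only [Finset.mem_Icc] at hn
    apply divisor_pair_bound _ ((f N).toNat) _ ?_ ?_ hKD
    · simpa using (hfpos n hn.1)
    · exact Int.toNat_le_toNat (hmono' n N hn.1 hn.2)
  -- natural-number main estimate
  have hnat : (∑ n ∈ Finset.Icc 1 N, (f n).toNat.divisors.card)
      ≤ 2 * ∑ d ∈ Finset.Icc 1 D,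
          ((Finset.Icc 1 N).filter (fun n => (d : ℤ) ∣ f n)).card := by
    calc (∑ n ∈ Finset.Icc 1 N, (f n).toNat.divisors.card)
        ≤ ∑ n ∈ Finset.Icc 1 N,
            2 * ((Finset.Icc 1 D).filter (· ∣ (f n).toNat)).card :=
          Finset.sum_le_sum hdiv
      _ = 2 * ∑ n ∈ Finset.Icc 1 N,
            ((Finset.Icc 1 D).filter (· ∣ (f n).toNat)).card := by
          rw [Finset.mul_sum]
      _ = 2 * ∑ d ∈ Finset.Icc 1 D,
            ((Finset.Icc 1 N).filter (fun n => (d : ℤ) ∣ f n)).card := by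
          congr 1
          simp only [Finset.card_filter]
          rw [Finset.sum_comm]
          apply Finset.sum_congr rfl
          intro d hd
          apply Finset.sum_congr rfl
          intro n hn
          simp only [Finset.mem_Icc] at hn
          have hpos' := hfpos n hn.1
          congr 1
          apply propext
          constructor <;> intro h
          · have : (d : ℤ) ∣ ((f n).toNat : ℤ) := Int.natCast_dvd_natCast.mpr h
            rwa [Int.toNat_of_nonneg hpos'.le] at this
          · have : (d : ℤ) ∣ ((f n).toNat : ℤ) := by
              rwa [Int.toNat_of_nonneg hpos'.le]
            exact Int.natCast_dvd_natCast.mp this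
  -- pass to the reals
  have hcast : (∑ n ∈ Finset.Icc 1 N, (((f n).toNat.divisors.card : ℝ)))
      ≤ 2 * ∑ d ∈ Finset.Icc 1 D,
          (((Finset.Icc 1 N).filter (fun n => (d : ℤ) ∣ f n)).card : ℝ) := by
    have := hnat
    push_cast
    exact_mod_cast this
  refine le_trans hcast ?_
  have hterm : ∀ d ∈ Finset.Icc 1 D,
      (((Finset.Icc 1 N).filter (fun n => (d : ℤ) ∣ f n)).card : ℝ)
        ≤ (N : ℝ) * ((ρ d : ℝ) / d) + (ρ d : ℝ) := by
    intro d hd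
    simp only [Finset.mem_Icc] at hd
    have h1 : (((Finset.Icc 1 N).filter (fun n => (d : ℤ) ∣ f n)).card : ℝ)
        ≤ ((ρ d : ℝ)) * (((N / d : ℕ) : ℝ) + 1) := by
      have := hcount d hd.1
      exact_mod_cast this
    have h2 : ((N / d : ℕ) : ℝ) ≤ (N : ℝ) / d := Nat.cast_div_le
    have hρnn : (0 : ℝ) ≤ (ρ d : ℝ) := Nat.cast_nonneg _
    calc (((Finset.Icc 1 N).filter (fun n => (d : ℤ) ∣ f n)).card : ℝ)
        ≤ ((ρ d : ℝ)) * (((N / d : ℕ) : ℝ) + 1) := h1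
      _ ≤ ((ρ d : ℝ)) * ((N : ℝ) / d + 1) := by nlinarith
      _ = (N : ℝ) * ((ρ d : ℝ) / d) + (ρ d : ℝ) := by
          field_simp
  calc 2 * ∑ d ∈ Finset.Icc 1 D,
        (((Finset.Icc 1 N).filter (fun n => (d : ℤ) ∣ f n)).card : ℝ)
      ≤ 2 * ∑ d ∈ Finset.Icc 1 D, ((N : ℝ) * ((ρ d : ℝ) / d) + (ρ d : ℝ)) := by
        have := Finset.sum_le_sum hterm
        linarith
    _ = 2 * N * (∑ d ∈ Finset.Icc 1 D, (ρ d : ℝ) / d)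
        + 2 * ∑ d ∈ Finset.Icc 1 D, (ρ d : ℝ) := by
        rw [Finset.sum_add_distrib, ← Finset.mul_sum]
        ring
end
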